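/- Let C be a finite type with a free additive action of ℤ/3ℤ, let Q be the quotient of C by the orbit equivalence relation with quotient map π, and for c, c' in the same orbit let sh(c,c') be the unique k ∈ ℤ/3ℤ with k +ᵥ c = c'. For an equivariant permutation f : C ≃ C with induced permutation f̄ of Q, define sh(f) = ∑_{v ∈ Q} sh(f(φ(v)), φ(f̄(v))) for a (any) section φ of π. Let S be a set of equivariant permutations of C such that every f ∈ S admits a section φ₀ of π with f(φ₀(v)) = φ₀(f̄(v)) for all v ∈ Q. Then every element g of the subgroup of Equiv.Perm C generated by S satisfies sh(g) = 0. -/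

import Mathlib

open scoped Classical

/-- The shift `sh c c'`: the (under a free action, unique) element `k : ZMod 3`
with `k +ᵥ c = c'`, when `c` and `c'` lie in the same orbit; junk value `0`
otherwise. -/
noncomputable def sh {C : Type*} [AddAction (ZMod 3) C] (c c' : C) : ZMod 3 :=
  if h : ∃ k : ZMod 3, k +ᵥ c = c' then h.choose else 0

section ShAux

variable {C : Type*} [AddAction (ZMod 3) C]

lemma sh_vadd {c c' : C} (h : ∃ k : ZMod 3, k +ᵥ c = c') : sh c c' +ᵥ c = c' := by
  unfold sh
  rw [dif_pos h]
  exact h.choose_spec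

lemma sh_eq (hfree : ∀ (k : ZMod 3) (c : C), k +ᵥ c = c → k = 0)
    {c c' : C} {k : ZMod 3} (h : k +ᵥ c = c') : sh c c' = k := by
  have hex : ∃ k : ZMod 3, k +ᵥ c = c' := ⟨k, h⟩
  have hv : sh c c' +ᵥ c = c' := sh_vadd hex
  have h0 : (-k + sh c c') +ᵥ c = c := by
    rw [add_vadd, hv, ← h, ← add_vadd, neg_add_cancel, zero_vadd]
  exact (neg_add_eq_zero.mp (hfree _ _ h0)).symm

lemma sh_self (hfree : ∀ (k : ZMod 3) (c : C), k +ᵥ c = c → k = 0) (c : C) :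
    sh c c = 0 :=
  sh_eq hfree (zero_vadd _ c)

lemma sh_trans (hfree : ∀ (k : ZMod 3) (c : C), k +ᵥ c = c → k = 0)
    {a b c : C} (h1 : ∃ k : ZMod 3, k +ᵥ a = b) (h2 : ∃ k : ZMod 3, k +ᵥ b = c) :
    sh a c = sh b c + sh a b :=
  sh_eq hfree (by rw [add_vadd, sh_vadd h1, sh_vadd h2])

lemma sh_symm (hfree : ∀ (k : ZMod 3) (c : C), k +ᵥ c = c → k = 0)
    {a b : C} (h : ∃ k : ZMod 3, k +ᵥ a = b) : sh a b = - sh b a := by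
  obtain ⟨k, hk⟩ := h
  have h1 : sh a b = k := sh_eq hfree hk
  have h2 : sh b a = -k :=
    sh_eq hfree (by rw [← hk, ← add_vadd, neg_add_cancel, zero_vadd])
  rw [h1, h2, neg_neg]

lemma sh_map (hfree : ∀ (k : ZMod 3) (c : C), k +ᵥ c = c → k = 0)
    {g : Equiv.Perm C} (hg : ∀ (k : ZMod 3) (c : C), g (k +ᵥ c) = k +ᵥ g c)
    {a b : C} (h : ∃ k : ZMod 3, k +ᵥ a = b) : sh (g a) (g b) = sh a b :=
  sh_eq hfree (by rw [← hg, sh_vadd h])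

end ShAux

/-- Theorem 4.3(v): if every permutation in `S` is equivariant and admits a section
of the quotient map compatible with it, then every element `g` of the subgroup
generated by `S` has total shift `sh g = 0` (computed with any induced permutation
`gbar` of the quotient and any section `φ`). -/
theorem sum_sh_eq_zero_of_mem_closure
    {C : Type*} [Finite C] [AddAction (ZMod 3) C]
    (hfree : ∀ (k : ZMod 3) (c : C), k +ᵥ c = c → k = 0)
    (S : Set (Equiv.Perm C))
    (hS : ∀ f ∈ S,
      (∀ (k : ZMod 3) (c : C), f (k +ᵥ c) = k +ᵥ f c) ∧
      ∃ fbar : Equiv.Perm (Quotient (AddAction.orbitRel (ZMod 3) C)),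
        (∀ c : C,
          Quotient.mk (AddAction.orbitRel (ZMod 3) C) (f c)
            = fbar (Quotient.mk (AddAction.orbitRel (ZMod 3) C) c)) ∧
        ∃ φ₀ : Quotient (AddAction.orbitRel (ZMod 3) C) → C,
          (∀ q, Quotient.mk (AddAction.orbitRel (ZMod 3) C) (φ₀ q) = q) ∧
          ∀ q, f (φ₀ q) = φ₀ (fbar q)) :
    ∀ g ∈ Subgroup.closure S,
      ∀ gbar : Equiv.Perm (Quotient (AddAction.orbitRel (ZMod 3) C)),
        (∀ c : C,
          Quotient.mk (AddAction.orbitRel (ZMod 3) C) (g c)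
            = gbar (Quotient.mk (AddAction.orbitRel (ZMod 3) C) c)) →
        ∀ φ : Quotient (AddAction.orbitRel (ZMod 3) C) → C,
          (∀ q, Quotient.mk (AddAction.orbitRel (ZMod 3) C) (φ q) = q) →
          ∑ᶠ q, sh (g (φ q)) (φ (gbar q)) = 0 := by
  set s := AddAction.orbitRel (ZMod 3) C with hs
  set Q := Quotient s with hQ
  let π : C → Q := Quotient.mk s
  have fQ : Fintype Q := Fintype.ofFinite Q
  -- from equal classes to the existence of a shift
  have same : ∀ {a b : C}, π a = π b → ∃ k : ZMod 3, k +ᵥ a = b := by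
    intro a b hab
    have h : s.r a b := Quotient.exact hab
    obtain ⟨k, hk⟩ := h
    have hk' : k +ᵥ b = a := hk
    exact ⟨-k, by rw [← hk', ← add_vadd, neg_add_cancel, zero_vadd]⟩
  have sound : ∀ {a b : C}, (∃ k : ZMod 3, k +ᵥ a = b) → π a = π b := by
    intro a b ⟨k, hk⟩
    refine Quotient.sound ⟨-k, ?_⟩
    show (-k : ZMod 3) +ᵥ b = a
    rw [← hk, ← add_vadd, neg_add_cancel, zero_vadd]
  -- every equivariant permutation induces a permutation of the quotient
  have exists_bar : ∀ (g : Equiv.Perm C),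
      (∀ (k : ZMod 3) (c : C), g (k +ᵥ c) = k +ᵥ g c) →
      ∃ gbar : Equiv.Perm Q, ∀ c : C, π (g c) = gbar (π c) := by
    intro g hg
    have hg' : ∀ (k : ZMod 3) (c : C), g.symm (k +ᵥ c) = k +ᵥ g.symm c := by
      intro k c
      apply g.injective
      rw [Equiv.apply_symm_apply, hg, Equiv.apply_symm_apply]
    have key : ∀ (e : Equiv.Perm C), (∀ (k : ZMod 3) (c : C), e (k +ᵥ c) = k +ᵥ e c) →
        ∀ a b : C, s.r a b → π (e a) = π (e b) := by
      intro e he a b ⟨k, hk⟩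
      have hk' : k +ᵥ b = a := hk
      refine sound ⟨-k, ?_⟩
      rw [← hk', he, ← add_vadd, neg_add_cancel, zero_vadd]
    refine ⟨⟨Quotient.lift (fun c => π (g c)) (key g hg),
             Quotient.lift (fun c => π (g.symm c)) (key g.symm hg'), ?_, ?_⟩,
           fun c => rfl⟩
    · intro q
      induction q using Quotient.ind with
      | _ c => show π (g.symm (g c)) = π c
               rw [Equiv.symm_apply_apply]
    · intro q
      induction q using Quotient.ind with
      | _ c => show π (g (g.symm c)) = π c
               rw [Equiv.apply_symm_apply]
  -- the sum is independent of the chosen section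
  have indep : ∀ (g : Equiv.Perm C),
      (∀ (k : ZMod 3) (c : C), g (k +ᵥ c) = k +ᵥ g c) →
      ∀ gbar : Equiv.Perm Q, (∀ c : C, π (g c) = gbar (π c)) →
      ∀ φ ψ : Q → C, (∀ q, π (φ q) = q) → (∀ q, π (ψ q) = q) →
      ∑ᶠ q, sh (g (φ q)) (φ (gbar q)) = ∑ᶠ q, sh (g (ψ q)) (ψ (gbar q)) := by
    intro g hg gbar hgbar φ ψ hφ hψ
    have horb : ∀ q : Q, π (g (φ q)) = π (g (ψ q)) := by
      intro q; rw [hgbar, hgbar, hφ, hψ]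
    have horb2 : ∀ q : Q, π (g (ψ q)) = π (ψ (gbar q)) := by
      intro q; rw [hgbar, hψ, hψ]
    have horb3 : ∀ q : Q, π (ψ (gbar q)) = π (φ (gbar q)) := by
      intro q; rw [hψ, hφ]
    have hterm : ∀ q : Q,
        sh (g (φ q)) (φ (gbar q))
          = sh (ψ (gbar q)) (φ (gbar q)) + sh (g (ψ q)) (ψ (gbar q))
            + sh (φ q) (ψ q) := by
      intro q
      have e1 : sh (g (φ q)) (φ (gbar q))
          = sh (g (ψ q)) (φ (gbar q)) + sh (g (φ q)) (g (ψ q)) :=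
        sh_trans hfree (same (horb q)) (same ((horb2 q).trans (horb3 q)))
      have e2 : sh (g (ψ q)) (φ (gbar q))
          = sh (ψ (gbar q)) (φ (gbar q)) + sh (g (ψ q)) (ψ (gbar q)) :=
        sh_trans hfree (same (horb2 q)) (same (horb3 q))
      have e3 : sh (g (φ q)) (g (ψ q)) = sh (φ q) (ψ q) :=
        sh_map hfree hg (same (by rw [hφ, hψ]))
      rw [e1, e2, e3]
    calc ∑ᶠ q, sh (g (φ q)) (φ (gbar q))
        = ∑ᶠ q, (sh (ψ (gbar q)) (φ (gbar q)) + sh (g (ψ q)) (ψ (gbar q))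
            + sh (φ q) (ψ q)) := by
          exact finsum_congr hterm
      _ = ∑ᶠ q, sh (g (ψ q)) (ψ (gbar q)) := by
          rw [finsum_eq_sum_of_fintype, finsum_eq_sum_of_fintype]
          rw [Finset.sum_add_distrib, Finset.sum_add_distrib]
          have hre : ∑ q : Q, sh (ψ (gbar q)) (φ (gbar q))
              = ∑ q : Q, sh (ψ q) (φ q) :=
            Equiv.sum_comp gbar (fun r => sh (ψ r) (φ r))
          have hneg : ∀ q : Q, sh (φ q) (ψ q) = - sh (ψ q) (φ q) := by
            intro q
            exact sh_symm hfree (same (by rw [hφ, hψ]))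
          rw [hre]
          rw [Finset.sum_congr rfl (fun q _ => hneg q)]
          rw [Finset.sum_neg_distrib]
          abel
  -- main induction over the closure
  intro g hg
  refine Subgroup.closure_induction
    (p := fun g _ => (∀ (k : ZMod 3) (c : C), g (k +ᵥ c) = k +ᵥ g c) ∧
      ∀ gbar : Equiv.Perm Q, (∀ c : C, π (g c) = gbar (π c)) →
      ∀ φ : Q → C, (∀ q, π (φ q) = q) →
        ∑ᶠ q, sh (g (φ q)) (φ (gbar q)) = 0)
    ?_ ?_ ?_ ?_ hg |>.2
  · -- generators
    intro f hf
    obtain ⟨hequiv, fbar, hfbar, φ₀, hφ₀, hcomp⟩ := hS f hf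
    refine ⟨hequiv, ?_⟩
    intro gbar hgbar φ hφ
    have hbar_eq : ∀ q : Q, gbar q = fbar q := by
      intro q
      induction q using Quotient.ind with
      | _ c => exact (hgbar c).symm.trans (hfbar c)
    rw [indep f hequiv gbar hgbar φ φ₀ hφ hφ₀]
    have : ∀ q : Q, sh (f (φ₀ q)) (φ₀ (gbar q)) = 0 := by
      intro q
      rw [hbar_eq, hcomp]
      exact sh_self hfree _
    rw [finsum_congr this, finsum_zero]
  · -- one
    refine ⟨fun k c => rfl, ?_⟩
    intro gbar hgbar φ hφ
    have : ∀ q : Q, sh ((1 : Equiv.Perm C) (φ q)) (φ (gbar q)) = 0 := by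
      intro q
      have h1 : gbar q = q := by
        conv_lhs => rw [← hφ q]
        rw [← hgbar]
        exact hφ q
      rw [h1]
      exact sh_self hfree _
    rw [finsum_congr this, finsum_zero]
  · -- mul
    rintro x y hx hy ⟨hxe, hxs⟩ ⟨hye, hys⟩
    have hxye : ∀ (k : ZMod 3) (c : C), (x * y) (k +ᵥ c) = k +ᵥ (x * y) c := by
      intro k c
      show x (y (k +ᵥ c)) = k +ᵥ x (y c)
      rw [hye, hxe]
    refine ⟨hxye, ?_⟩
    intro gbar hgbar φ hφ
    obtain ⟨ybar, hybar⟩ := exists_bar y hye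
    obtain ⟨xbar, hxbar⟩ := exists_bar x hxe
    have hbar_eq : ∀ q : Q, gbar q = xbar (ybar q) := by
      intro q
      induction q using Quotient.ind with
      | _ c =>
          have hxy : π ((x * y) c) = xbar (ybar (π c)) := by
            show π (x (y c)) = _
            rw [hxbar, hybar]
          exact (hgbar c).symm.trans hxy
    have hterm : ∀ q : Q,
        sh ((x * y) (φ q)) (φ (gbar q))
          = sh (x (φ (ybar q))) (φ (xbar (ybar q))) + sh (y (φ q)) (φ (ybar q)) := by
      intro q
      have o1 : π (x (y (φ q))) = π (x (φ (ybar q))) := by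
        rw [hxbar, hxbar, hybar, hφ, hφ]
      have o2 : π (x (φ (ybar q))) = π (φ (xbar (ybar q))) := by
        rw [hxbar, hφ, hφ]
      have e1 : sh ((x * y) (φ q)) (φ (gbar q))
          = sh (x (φ (ybar q))) (φ (xbar (ybar q))) + sh (x (y (φ q))) (x (φ (ybar q))) := by
        rw [hbar_eq]
        exact sh_trans hfree (same o1) (same o2)
      have e2 : sh (x (y (φ q))) (x (φ (ybar q))) = sh (y (φ q)) (φ (ybar q)) :=
        sh_map hfree hxe (same (by rw [hybar, hφ, hφ]))
      rw [e1, e2]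
    calc ∑ᶠ q, sh ((x * y) (φ q)) (φ (gbar q))
        = ∑ᶠ q, (sh (x (φ (ybar q))) (φ (xbar (ybar q))) + sh (y (φ q)) (φ (ybar q))) :=
          finsum_congr hterm
      _ = 0 := by
          rw [finsum_eq_sum_of_fintype, Finset.sum_add_distrib]
          have h1 : ∑ q : Q, sh (x (φ (ybar q))) (φ (xbar (ybar q)))
              = ∑ q : Q, sh (x (φ q)) (φ (xbar q)) :=
            Equiv.sum_comp ybar (fun r => sh (x (φ r)) (φ (xbar r)))
          have h2 : ∑ q : Q, sh (x (φ q)) (φ (xbar q)) = 0 := by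
            rw [← finsum_eq_sum_of_fintype]
            exact hxs xbar hxbar φ hφ
          have h3 : ∑ q : Q, sh (y (φ q)) (φ (ybar q)) = 0 := by
            rw [← finsum_eq_sum_of_fintype]
            exact hys ybar hybar φ hφ
          rw [h1, h2, h3, add_zero]
  · -- inv
    rintro x hx ⟨hxe, hxs⟩
    have hxie : ∀ (k : ZMod 3) (c : C), x⁻¹ (k +ᵥ c) = k +ᵥ x⁻¹ c := by
      intro k c
      apply x.injective
      show x (x⁻¹ (k +ᵥ c)) = x (k +ᵥ x⁻¹ c)
      rw [hxe]
      show (x * x⁻¹) (k +ᵥ c) = k +ᵥ (x * x⁻¹) c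
      rw [mul_inv_cancel]
      rfl
    refine ⟨hxie, ?_⟩
    intro gbar hgbar φ hφ
    have hinv : ∀ c : C, π (x c) = gbar⁻¹ (π c) := by
      intro c
      have h1 : π (x⁻¹ (x c)) = gbar (π (x c)) := hgbar (x c)
      rw [Equiv.Perm.inv_def, Equiv.symm_apply_apply] at h1
      exact (Equiv.eq_symm_apply gbar).mpr h1.symm
    have hterm : ∀ q : Q,
        sh (x⁻¹ (φ q)) (φ (gbar q)) = - sh (x (φ (gbar q))) (φ (gbar⁻¹ (gbar q))) := by
      intro q
      have o1 : π (x⁻¹ (φ q)) = π (φ (gbar q)) := by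
        rw [hgbar, hφ, hφ]
      have e1 : sh (x⁻¹ (φ q)) (φ (gbar q)) = - sh (φ (gbar q)) (x⁻¹ (φ q)) :=
        sh_symm hfree (same o1)
      have e2 : sh (x (φ (gbar q))) (x (x⁻¹ (φ q))) = sh (φ (gbar q)) (x⁻¹ (φ q)) :=
        sh_map hfree hxe (same o1.symm)
      have e3 : x (x⁻¹ (φ q)) = φ q := x.apply_symm_apply _
      have e4 : φ (gbar⁻¹ (gbar q)) = φ q := by rw [Equiv.Perm.inv_def, Equiv.symm_apply_apply]
      rw [e1, ← e2, e3, e4]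
    calc ∑ᶠ q, sh (x⁻¹ (φ q)) (φ (gbar q))
        = ∑ᶠ q, - sh (x (φ (gbar q))) (φ (gbar⁻¹ (gbar q))) := finsum_congr hterm
      _ = 0 := by
          rw [finsum_eq_sum_of_fintype, Finset.sum_neg_distrib]
          have h1 : ∑ q : Q, sh (x (φ (gbar q))) (φ (gbar⁻¹ (gbar q)))
              = ∑ q : Q, sh (x (φ q)) (φ (gbar⁻¹ q)) :=
            Equiv.sum_comp gbar (fun r => sh (x (φ r)) (φ (gbar⁻¹ r)))
          rw [h1, ← finsum_eq_sum_of_fintype, hxs gbar⁻¹ hinv φ hφ, neg_zero]
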